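/- Change-of-treatment weighting identity: under positivity, for any bounded function h(W,S), E_X[ 1(A = a₁)/g_{A|W}(a₂|W) · (g_{A|W,S}(a₂|W,S)/g_{A|W,S}(a₁|W,S)) · h(W,S) ] = E_X[ 1(A = a₂)/g_{A|W}(a₂|W) · h(W,S) ]. In particular, the inverse-probability weights in the first term of the efficient influence function shift the conditional distribution of S from arm a₁ to arm a₂. -/

import Mathlib

open scoped Classical BigOperators

noncomputable def Pr {Ω : Type*} [Fintype Ω] (p : Ω → ℝ) (E : Ω → Prop) : ℝ :=
  ∑ ω, if E ω then p ω else 0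

noncomputable def Ex {Ω : Type*} [Fintype Ω] (p : Ω → ℝ) (X : Ω → ℝ) : ℝ :=
  ∑ ω, p ω * X ω

noncomputable def CPr {Ω : Type*} [Fintype Ω] (p : Ω → ℝ) (E F : Ω → Prop) : ℝ :=
  Pr p (fun ω => E ω ∧ F ω) / Pr p F

/-- change-of-treatment weighting identity. Under positivity, for any
function `h(W,S)`,
`E[ 1(A=a₁)/g_{A|W}(a₂|W) · (g_{A|W,S}(a₂|W,S)/g_{A|W,S}(a₁|W,S)) · h(W,S) ]
  = E[ 1(A=a₂)/g_{A|W}(a₂|W) · h(W,S) ]`. -/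
theorem change_of_treatment_weighting {Ω 𝕎 𝕊 : Type*} [Fintype Ω]
    (p : Ω → ℝ) (hp : ∀ ω, 0 ≤ p ω) (hp1 : ∑ ω, p ω = 1)
    (W : Ω → 𝕎) (S : Ω → 𝕊) (A : Ω → Bool) (a₁ a₂ : Bool) (h : 𝕎 → 𝕊 → ℝ)
    (hgA : ∀ w : 𝕎, Pr p (fun ω => W ω = w) > 0 → ∀ a : Bool,
      0 < CPr p (fun ω => A ω = a) (fun ω => W ω = w) ∧
        CPr p (fun ω => A ω = a) (fun ω => W ω = w) < 1)
    (hgAS : ∀ (w : 𝕎) (s : 𝕊), Pr p (fun ω => W ω = w ∧ S ω = s) > 0 → ∀ a : Bool,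
      0 < CPr p (fun ω => A ω = a) (fun ω => W ω = w ∧ S ω = s) ∧
        CPr p (fun ω => A ω = a) (fun ω => W ω = w ∧ S ω = s) < 1) :
    Ex p (fun ω =>
        (if A ω = a₁ then 1 else 0) / CPr p (fun ω' => A ω' = a₂) (fun ω' => W ω' = W ω)
          * (CPr p (fun ω' => A ω' = a₂) (fun ω' => W ω' = W ω ∧ S ω' = S ω)
              / CPr p (fun ω' => A ω' = a₁) (fun ω' => W ω' = W ω ∧ S ω' = S ω))
          * h (W ω) (S ω))
      = Ex p (fun ω =>
          (if A ω = a₂ then 1 else 0) / CPr p (fun ω' => A ω' = a₂) (fun ω' => W ω' = W ω)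
            * h (W ω) (S ω)) := by
  classical
  have hPrnonneg : ∀ E : Ω → Prop, 0 ≤ Pr p E := fun E =>
    Finset.sum_nonneg fun ω _ => by by_cases hE : E ω <;> simp [hE, hp ω]
  have hPrfilter : ∀ (a : Bool) (w : 𝕎) (s : 𝕊),
      ∑ ω ∈ Finset.univ.filter (fun ω => (W ω, S ω) = (w, s)),
        p ω * (if A ω = a then (1:ℝ) else 0)
      = Pr p (fun ω => A ω = a ∧ (W ω = w ∧ S ω = s)) := by
    intro a w s
    rw [Finset.sum_filter]
    unfold Pr
    apply Finset.sum_congr rfl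
    intro ω _
    by_cases h1 : A ω = a <;> by_cases h2 : W ω = w <;> by_cases h3 : S ω = s <;>
      simp [h1, h2, h3, Prod.ext_iff]
  have fiber : ∀ (a : Bool) (F : 𝕎 → 𝕊 → ℝ),
      ∑ ω, p ω * ((if A ω = a then (1:ℝ) else 0) * F (W ω) (S ω))
        = ∑ t ∈ Finset.univ.image (fun ω => (W ω, S ω)),
            Pr p (fun ω => A ω = a ∧ (W ω = t.1 ∧ S ω = t.2)) * F t.1 t.2 := by
    intro a F
    rw [← Finset.sum_fiberwise_of_maps_to (g := fun ω => (W ω, S ω))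
          (fun x _ => Finset.mem_image_of_mem _ (Finset.mem_univ x))]
    apply Finset.sum_congr rfl
    intro t _
    rw [← hPrfilter a t.1 t.2, Finset.sum_mul]
    apply Finset.sum_congr rfl
    intro ω hω
    simp only [Finset.mem_filter, Finset.mem_univ, true_and] at hω
    have h1 : W ω = t.1 := by rw [← hω]
    have h2 : S ω = t.2 := by rw [← hω]
    rw [h1, h2]; ring
  set F₁ : 𝕎 → 𝕊 → ℝ := fun w s =>
    CPr p (fun ω' => A ω' = a₂) (fun ω' => W ω' = w ∧ S ω' = s)
      / CPr p (fun ω' => A ω' = a₁) (fun ω' => W ω' = w ∧ S ω' = s)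
      * h w s / CPr p (fun ω' => A ω' = a₂) (fun ω' => W ω' = w) with hF₁
  set F₂ : 𝕎 → 𝕊 → ℝ := fun w s =>
    h w s / CPr p (fun ω' => A ω' = a₂) (fun ω' => W ω' = w) with hF₂
  have L : Ex p (fun ω =>
        (if A ω = a₁ then 1 else 0) / CPr p (fun ω' => A ω' = a₂) (fun ω' => W ω' = W ω)
          * (CPr p (fun ω' => A ω' = a₂) (fun ω' => W ω' = W ω ∧ S ω' = S ω)
              / CPr p (fun ω' => A ω' = a₁) (fun ω' => W ω' = W ω ∧ S ω' = S ω))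
          * h (W ω) (S ω))
      = ∑ ω, p ω * ((if A ω = a₁ then (1:ℝ) else 0) * F₁ (W ω) (S ω)) := by
    unfold Ex
    apply Finset.sum_congr rfl
    intro ω _
    simp only [hF₁]
    ring
  have R : Ex p (fun ω =>
        (if A ω = a₂ then 1 else 0) / CPr p (fun ω' => A ω' = a₂) (fun ω' => W ω' = W ω)
          * h (W ω) (S ω))
      = ∑ ω, p ω * ((if A ω = a₂ then (1:ℝ) else 0) * F₂ (W ω) (S ω)) := by
    unfold Ex
    apply Finset.sum_congr rfl
    intro ω _
    simp only [hF₂]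
    ring
  rw [L, R, fiber a₁ F₁, fiber a₂ F₂]
  apply Finset.sum_congr rfl
  intro t _
  obtain ⟨w, s⟩ := t
  simp only [hF₁, hF₂]
  set Prws := Pr p (fun ω => W ω = w ∧ S ω = s) with hPrws
  have hPrle : ∀ a : Bool, Pr p (fun ω => A ω = a ∧ (W ω = w ∧ S ω = s)) ≤ Prws := by
    intro a
    apply Finset.sum_le_sum
    intro ω _
    by_cases h1 : A ω = a <;> by_cases h2 : W ω = w <;> by_cases h3 : S ω = s <;>
      simp [h1, h2, h3, hp ω]
  rcases eq_or_lt_of_le (hPrnonneg (fun ω => W ω = w ∧ S ω = s)) with hz | hpos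
  · have hz1 : Pr p (fun ω => A ω = a₁ ∧ (W ω = w ∧ S ω = s)) = 0 :=
      le_antisymm (le_trans (hPrle a₁) hz.symm.le) (hPrnonneg _)
    have hz2 : Pr p (fun ω => A ω = a₂ ∧ (W ω = w ∧ S ω = s)) = 0 :=
      le_antisymm (le_trans (hPrle a₂) hz.symm.le) (hPrnonneg _)
    simp [hz1, hz2]
  · -- positive case
    have hPrw : 0 < Pr p (fun ω => W ω = w) := by
      refine lt_of_lt_of_le hpos ?_
      apply Finset.sum_le_sum
      intro ω _
      by_cases h2 : W ω = w <;> by_cases h3 : S ω = s <;> simp [h2, h3, hp ω]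
    have hg2w := (hgA w hPrw a₂).1
    have hg1s := (hgAS w s hpos a₁).1
    have hg2s := (hgAS w s hpos a₂).1
    have hPr1 : Pr p (fun ω => A ω = a₁ ∧ (W ω = w ∧ S ω = s))
        = CPr p (fun ω' => A ω' = a₁) (fun ω' => W ω' = w ∧ S ω' = s) * Prws := by
      rw [CPr]; field_simp; rfl
    have hPr2 : Pr p (fun ω => A ω = a₂ ∧ (W ω = w ∧ S ω = s))
        = CPr p (fun ω' => A ω' = a₂) (fun ω' => W ω' = w ∧ S ω' = s) * Prws := by
      rw [CPr]; field_simp; rfl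
    rw [hPr1, hPr2]
    field_simp
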